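/- Let B = I + W where W is an n×n nilpotent matrix over a field F of characteristic 0, and let X = [[W, B],[0, W]] (so X = C - I where C = [[B,B],[0,B]]). Then the nilpotent index of X is one more than the nilpotent index of W (assuming W ≠ 0). -/

import Mathlib

lemma pow_fromBlocks_aux {F : Type*} [CommRing F] {n : ℕ}
    (A B : Matrix (Fin n) (Fin n) F) (hAB : A * B = B * A) (k : ℕ) :
    (Matrix.fromBlocks A B 0 A) ^ k =
      Matrix.fromBlocks (A ^ k) (k • (A ^ (k - 1) * B)) 0 (A ^ k) := by
  induction k with
  | zero => simp [Matrix.fromBlocks_one]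
  | succ k ih =>
    rw [pow_succ, ih, Matrix.fromBlocks_multiply]
    simp only [Matrix.mul_zero, Matrix.zero_mul, add_zero, zero_add, Matrix.zero_mul]
    have hkey : (k • (A ^ (k - 1) * B)) * A = k • (A ^ k * B) := by
        cases k with
        | zero => simp
        | succ m =>
          rw [smul_mul_assoc]
          congr 1
          simp only [Nat.succ_sub_one]
          rw [mul_assoc, ← hAB, ← mul_assoc, ← pow_succ]
    rw [hkey, Nat.succ_sub_one, succ_nsmul, add_comm, pow_succ]

/-- Let `W ≠ 0` be nilpotent over a field of characteristic zero, `B = I + W`, and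
`X = [[W, B], [0, W]]`.  Then the nilpotent index of `X` is one more than that of `W`:
if `W^r = 0` and `W^(r-1) ≠ 0`, then `X^(r+1) = 0` and `X^r ≠ 0`. -/
theorem nilpotent_index_block_t2 {F : Type*} [Field F] [CharZero F] {n : ℕ}
    (W : Matrix (Fin n) (Fin n) F) (hW : W ≠ 0) (r : ℕ) (hr : 1 ≤ r)
    (h1 : W ^ r = 0) (h2 : W ^ (r - 1) ≠ 0)
    (X : Matrix (Fin n ⊕ Fin n) (Fin n ⊕ Fin n) F)
    (hX : X = Matrix.fromBlocks W (1 + W) 0 W) :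
    X ^ (r + 1) = 0 ∧ X ^ r ≠ 0 := by
  have hcomm : W * (1 + W) = (1 + W) * W := by noncomm_ring
  subst hX
  constructor
  · rw [pow_fromBlocks_aux W (1 + W) hcomm]
    simp only [Nat.add_sub_cancel, h1]
    have : W ^ (r + 1) = 0 := by rw [pow_succ, h1, Matrix.zero_mul]
    simp [this]
  · rw [pow_fromBlocks_aux W (1 + W) hcomm]
    intro h
    have htr : r • (W ^ (r - 1) * (1 + W)) = 0 := by
      have := congrArg (fun M => M.toBlocks₁₂) h
      have h0 : (0 : Matrix (Fin n ⊕ Fin n) (Fin n ⊕ Fin n) F).toBlocks₁₂ = 0 := by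
        ext i j; rfl
      simpa [Matrix.toBlocks_fromBlocks₁₂, h0] using this
    have hsimp : W ^ (r - 1) * (1 + W) = W ^ (r - 1) := by
      rw [mul_add, mul_one, ← pow_succ, Nat.sub_add_cancel hr, h1, add_zero]
    rw [hsimp] at htr
    apply h2
    ext i j
    have := congrFun (congrFun htr i) j
    simp only [Matrix.smul_apply, nsmul_eq_mul, Matrix.zero_apply] at this
    have hr0 : (r : F) ≠ 0 := Nat.cast_ne_zero.mpr (by omega)
    simp only [Matrix.zero_apply]
    exact (mul_eq_zero.mp this).resolve_left hr0
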